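/- Let V be an n-dimensional real inner product space with n ≥ 2, let B be a symmetric bilinear form on V whose trace (with respect to any orthonormal basis) is zero, and let ν ∈ V be a unit vector. Let B(ν) ∈ V be the unique vector with ⟨B(ν), w⟩ = B(ν, w) for all w ∈ V, let B(ν)^T = B(ν) − B(ν,ν)·ν be its component orthogonal to ν, let B₀ and g₀ be the restrictions of B and of the inner product to the orthogonal complement ν^⊥, and let tr B₀ be the trace of B₀ on ν^⊥. Then |B|² = (n/(n−1))·|B(ν)|² + ((n−2)/(n−1))·|B(ν)^T|² + |B₀ − (tr B₀/(n−1))·g₀|², where |·|² applied to a bilinear form denotes the squared Frobenius norm (the sum of the squares of its entries in an orthonormal basis of the relevant space). -/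

import Mathlib

open RealInnerProductSpace Submodule

/-- Decomposition of the squared Frobenius norm of a trace-free symmetric bilinear
form `B` relative to a unit vector `ν`:
`|B|² = (n/(n−1))·|B(ν)|² + ((n−2)/(n−1))·|B(ν)ᵀ|² + |B₀ − (tr B₀/(n−1))·g₀|²`. -/
theorem stmt_10 {V : Type*} [NormedAddCommGroup V] [InnerProductSpace ℝ V]
    (n : ℕ) (hn : 2 ≤ n) (hdim : Module.finrank ℝ V = n)
    (B : V →ₗ[ℝ] V →ₗ[ℝ] ℝ) (hsymm : ∀ v w : V, B v w = B w v)
    (e : OrthonormalBasis (Fin n) ℝ V)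
    (htrace : ∑ i, B (e i) (e i) = 0)
    (ν : V) (hν : ‖ν‖ = 1)
    (Bν : V) (hBν : ∀ w : V, ⟪Bν, w⟫ = B ν w)
    (e₀ : OrthonormalBasis (Fin (n - 1)) ℝ ((ℝ ∙ ν)ᗮ)) :
    ∑ i, ∑ j, (B (e i) (e j)) ^ 2 =
      (n / (n - 1) : ℝ) * ‖Bν‖ ^ 2 +
        ((n - 2) / (n - 1) : ℝ) * ‖Bν - (B ν ν) • ν‖ ^ 2 +
        ∑ i, ∑ j, (B (e₀ i : V) (e₀ j : V) -
          (∑ l, B (e₀ l : V) (e₀ l : V)) / (n - 1 : ℝ) *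
            ⟪(e₀ i : V), (e₀ j : V)⟫) ^ 2 := by
  have hfin : FiniteDimensional ℝ V := Module.Finite.of_basis e.toBasis
  obtain ⟨m, rfl⟩ : ∃ m, n = m + 1 := ⟨n - 1, by omega⟩
  have hm : 1 ≤ m := by omega
  have hm0 : (m : ℝ) ≠ 0 := by positivity
  -- abbreviate the trace of the restriction
  set t : ℝ := ∑ l, B (e₀ l : V) (e₀ l : V) with ht
  -- the operator associated to B
  set T : V → V := fun v =>
    (InnerProductSpace.toDual ℝ V).symm (LinearMap.toContinuousLinearMap (B v)) with hTdef
  have hT : ∀ v w : V, ⟪T v, w⟫ = B v w := by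
    intro v w
    simp [hTdef, InnerProductSpace.toDual_symm_apply]
  have hTs : ∀ v w : V, ⟪T v, w⟫ = ⟪T w, v⟫ := by
    intro v w; rw [hT, hT, hsymm]
  -- orthogonality facts
  have hνe : ∀ k, ⟪ν, (e₀ k : V)⟫ = 0 := by
    intro k
    exact (Submodule.mem_orthogonal _ _).1 (Submodule.coe_mem (e₀ k)) ν
      (Submodule.mem_span_singleton_self ν)
  have he₀ : ∀ i j, ⟪(e₀ i : V), (e₀ j : V)⟫ = if i = j then (1:ℝ) else 0 := by
    intro i j
    have := e₀.orthonormal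
    rw [orthonormal_iff_ite] at this
    simpa [Submodule.coe_inner] using this i j
  have hνν : ⟪ν, ν⟫ = (1:ℝ) := by
    rw [real_inner_self_eq_norm_sq, hν]; norm_num
  -- the adapted orthonormal basis
  set g : Fin (m + 1) → V := Fin.cons ν (fun k => (e₀ k : V)) with hgdef
  have hgon : Orthonormal ℝ g := by
    rw [orthonormal_iff_ite]
    intro i j
    refine Fin.cases ?_ (fun k => ?_) i <;> refine Fin.cases ?_ (fun l => ?_) j
    · simp [hgdef, hνν, hν]
    · simp only [hgdef, Fin.cons_zero, Fin.cons_succ]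
      rw [if_neg (Ne.symm (Fin.succ_ne_zero l))]
      exact hνe l
    · simp only [hgdef, Fin.cons_zero, Fin.cons_succ]
      rw [if_neg (Fin.succ_ne_zero k), real_inner_comm]
      exact hνe k
    · simp only [hgdef, Fin.cons_succ]
      rw [he₀ k l]
      simp [Fin.succ_inj]
  have hspan : span ℝ (Set.range g) = ⊤ :=
    hgon.linearIndependent.span_eq_top_of_card_eq_finrank (by simp [hdim])
  let gb : OrthonormalBasis (Fin (m + 1)) ℝ V := OrthonormalBasis.mk hgon hspan.ge
  have hgb : ∀ i, gb i = g i := fun i =>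
    congrFun (OrthonormalBasis.coe_mk hgon hspan.ge) i
  -- basis independence of the Frobenius norm
  have hfrob : ∀ a b : OrthonormalBasis (Fin (m + 1)) ℝ V,
      ∑ i, ∑ j, (B (a i) (a j)) ^ 2 = ∑ i, ∑ j, (B (b i) (b j)) ^ 2 := by
    have aux : ∀ a b : OrthonormalBasis (Fin (m + 1)) ℝ V,
        ∑ i, ∑ j, (B (a i) (a j)) ^ 2 = ∑ i, ∑ j, (⟪T (a i), b j⟫) ^ 2 := by
      intro a b
      refine Finset.sum_congr rfl fun i _ => ?_
      calc ∑ j, (B (a i) (a j)) ^ 2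
          = ∑ j, ⟪T (a i), a j⟫ * ⟪a j, T (a i)⟫ := by
            refine Finset.sum_congr rfl fun j _ => ?_
            rw [← hT, real_inner_comm (a j) (T (a i)), sq]
        _ = ⟪T (a i), T (a i)⟫ := a.sum_inner_mul_inner _ _
        _ = ∑ j, ⟪T (a i), b j⟫ * ⟪b j, T (a i)⟫ := (b.sum_inner_mul_inner _ _).symm
        _ = ∑ j, (⟪T (a i), b j⟫) ^ 2 := by
            refine Finset.sum_congr rfl fun j _ => ?_
            rw [real_inner_comm (b j) (T (a i)), sq]
    intro a b
    calc ∑ i, ∑ j, (B (a i) (a j)) ^ 2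
        = ∑ i, ∑ j, (⟪T (a i), b j⟫) ^ 2 := aux a b
      _ = ∑ i, ∑ j, (⟪T (b j), a i⟫) ^ 2 := by
          refine Finset.sum_congr rfl fun i _ => Finset.sum_congr rfl fun j _ => ?_
          rw [hTs]
      _ = ∑ j, ∑ i, (⟪T (b j), a i⟫) ^ 2 := Finset.sum_comm
      _ = ∑ i, ∑ j, (B (b i) (b j)) ^ 2 := (aux b a).symm
  -- basis independence of the trace
  have htr : ∀ a b : OrthonormalBasis (Fin (m + 1)) ℝ V,
      ∑ i, B (a i) (a i) = ∑ i, B (b i) (b i) := by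
    intro a b
    calc ∑ i, B (a i) (a i)
        = ∑ i, ∑ j, ⟪T (b j), a i⟫ * ⟪a i, b j⟫ := by
          refine Finset.sum_congr rfl fun i _ => ?_
          rw [← hT, ← b.sum_inner_mul_inner (T (a i)) (a i)]
          refine Finset.sum_congr rfl fun j _ => ?_
          rw [hTs (a i) (b j), real_inner_comm (b j) (a i)]
      _ = ∑ j, B (b j) (b j) := by
          rw [Finset.sum_comm]
          refine Finset.sum_congr rfl fun j _ => ?_
          rw [a.sum_inner_mul_inner (T (b j)) (b j), hT]
  -- trace relation
  have htrace' : B ν ν + t = 0 := by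
    rw [htr e gb, Fin.sum_univ_succ] at htrace
    simp only [hgb, hgdef, Fin.cons_zero, Fin.cons_succ] at htrace
    exact htrace
  have key : t = -(B ν ν) := by linarith
  -- the LHS in the adapted basis
  have hLHS : ∑ i, ∑ j, (B (e i) (e j)) ^ 2
      = (B ν ν) ^ 2 + ∑ k, (B ν (e₀ k : V)) ^ 2 +
        (∑ k, (B ν (e₀ k : V)) ^ 2 + ∑ i, ∑ j, (B (e₀ i : V) (e₀ j : V)) ^ 2) := by
    rw [hfrob e gb]
    simp only [hgb, hgdef, Fin.sum_univ_succ, Fin.cons_zero, Fin.cons_succ]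
    rw [Finset.sum_add_distrib]
    have hsk : ∀ k, B (e₀ k : V) ν = B ν (e₀ k : V) := fun k => hsymm _ _
    simp only [hsk]
    rfl
  -- norms
  have hBν2 : ‖Bν‖ ^ 2 = (B ν ν) ^ 2 + ∑ k, (B ν (e₀ k : V)) ^ 2 := by
    have h1 : ∀ w : V, ⟪Bν, w⟫ * ⟪w, Bν⟫ = (B ν w) ^ 2 := by
      intro w; rw [real_inner_comm Bν w, hBν, sq]
    calc ‖Bν‖ ^ 2 = ⟪Bν, Bν⟫ := (real_inner_self_eq_norm_sq _).symm
      _ = ∑ i, ⟪Bν, gb i⟫ * ⟪gb i, Bν⟫ := (gb.sum_inner_mul_inner _ _).symm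
      _ = (B ν ν) ^ 2 + ∑ k, (B ν (e₀ k : V)) ^ 2 := by
          rw [Fin.sum_univ_succ]
          simp only [hgb, hgdef, Fin.cons_zero, Fin.cons_succ, h1]
          rfl
  have hBνT2 : ‖Bν - (B ν ν) • ν‖ ^ 2 = ∑ k, (B ν (e₀ k : V)) ^ 2 := by
    have hX : ∀ w : V, ⟪ν, w⟫ = 0 → ⟪Bν - (B ν ν) • ν, w⟫ = B ν w := by
      intro w hw
      rw [inner_sub_left, real_inner_smul_left, hw, hBν]; ring
    have hX0 : ⟪Bν - (B ν ν) • ν, ν⟫ = 0 := by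
      rw [inner_sub_left, real_inner_smul_left, hBν, hνν]; ring
    calc ‖Bν - (B ν ν) • ν‖ ^ 2 = ⟪Bν - (B ν ν) • ν, Bν - (B ν ν) • ν⟫ :=
          (real_inner_self_eq_norm_sq _).symm
      _ = ∑ i, ⟪Bν - (B ν ν) • ν, gb i⟫ * ⟪gb i, Bν - (B ν ν) • ν⟫ :=
          (gb.sum_inner_mul_inner _ _).symm
      _ = ∑ k, (B ν (e₀ k : V)) ^ 2 := by
          rw [Fin.sum_univ_succ]
          simp only [hgb, hgdef, Fin.cons_zero, Fin.cons_succ]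
          rw [hX0, zero_mul, zero_add]
          exact Finset.sum_congr rfl fun k _ => by
            rw [real_inner_comm (Bν - (B ν ν) • ν) ((e₀ k : V)), hX _ (hνe k), sq]
  -- the third sum
  have hthird : ∑ i, ∑ j, (B (e₀ i : V) (e₀ j : V) -
        t / (m : ℝ) * ⟪(e₀ i : V), (e₀ j : V)⟫) ^ 2
      = (∑ i, ∑ j, (B (e₀ i : V) (e₀ j : V)) ^ 2) - 2 * (t / m) * t + (m : ℝ) * (t / m) ^ 2 := by
    have expand : ∀ i j, (B (e₀ i : V) (e₀ j : V) -
          t / (m : ℝ) * ⟪(e₀ i : V), (e₀ j : V)⟫) ^ 2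
        = (B (e₀ i : V) (e₀ j : V)) ^ 2
          - (if i = j then 2 * (t / m) * B (e₀ i : V) (e₀ j : V) else 0)
          + (if i = j then (t / m) ^ 2 else 0) := by
      intro i j
      rw [he₀]
      split <;> ring
    calc ∑ i, ∑ j, (B (e₀ i : V) (e₀ j : V) -
          t / (m : ℝ) * ⟪(e₀ i : V), (e₀ j : V)⟫) ^ 2
        = ∑ i, ((∑ j, (B (e₀ i : V) (e₀ j : V)) ^ 2)
            - 2 * (t / m) * B (e₀ i : V) (e₀ i : V) + (t / m) ^ 2) := by
          refine Finset.sum_congr rfl fun i _ => ?_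
          simp only [expand]
          rw [Finset.sum_add_distrib, Finset.sum_sub_distrib]
          congr 1
          · congr 1
            simp [Finset.sum_ite_eq]
          · simp [Finset.sum_ite_eq]
      _ = _ := by
          rw [Finset.sum_add_distrib, Finset.sum_sub_distrib, ← Finset.mul_sum,
            Finset.sum_const, Finset.card_univ, nsmul_eq_mul]
          congr 2
          simp
  -- put it together
  rw [hLHS, hBν2, hBνT2]
  push_cast
  simp only [show ((m:ℝ) + 1) - 1 = (m:ℝ) from by ring,
    show ((m:ℝ) + 1) - 2 = (m:ℝ) - 1 from by ring]
  rw [hthird, key]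
  field_simp
  ring
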